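/- arXiv:2603.10882 — 3 statements merged into one kernel-verified Lean document; each statement's English description precedes it below -/
import Mathlib

section
/- Let v(k) = k / (2|k|^{3/2}) for nonzero k ∈ R². Then for all nonzero k₂, k₃ ∈ R², |v(k₂) − v(k₃)| ≥ |k₂ − k₃| / (2·√(|k₂||k₃|)·(√|k₂| + √|k₃|)). -/
open Real

theorem group_velocity_lower_bound
    (k₂ k₃ : EuclideanSpace ℝ (Fin 2)) (h₂ : k₂ ≠ 0) (h₃ : k₃ ≠ 0) :
    ‖(2 * ‖k₂‖ ^ ((3:ℝ)/2))⁻¹ • k₂ - (2 * ‖k₃‖ ^ ((3:ℝ)/2))⁻¹ • k₃‖ ≥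
      ‖k₂ - k₃‖ / (2 * Real.sqrt (‖k₂‖ * ‖k₃‖) * (Real.sqrt ‖k₂‖ + Real.sqrt ‖k₃‖)) := by
  have ha0 : (0:ℝ) < ‖k₂‖ := norm_pos_iff.mpr h₂
  have hb0 : (0:ℝ) < ‖k₃‖ := norm_pos_iff.mpr h₃
  set sa := Real.sqrt ‖k₂‖ with hsa_def
  set sb := Real.sqrt ‖k₃‖ with hsb_def
  have hsa : 0 < sa := Real.sqrt_pos.mpr ha0
  have hsb : 0 < sb := Real.sqrt_pos.mpr hb0
  have hsa2 : sa ^ 2 = ‖k₂‖ := Real.sq_sqrt ha0.le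
  have hsb2 : sb ^ 2 = ‖k₃‖ := Real.sq_sqrt hb0.le
  have hra : ‖k₂‖ ^ ((3:ℝ)/2) = sa ^ 3 := by
    rw [hsa_def, Real.sqrt_eq_rpow, ← Real.rpow_natCast (‖k₂‖ ^ ((1:ℝ)/2)) 3,
      ← Real.rpow_mul ha0.le]
    norm_num
  have hrb : ‖k₃‖ ^ ((3:ℝ)/2) = sb ^ 3 := by
    rw [hsb_def, Real.sqrt_eq_rpow, ← Real.rpow_natCast (‖k₃‖ ^ ((1:ℝ)/2)) 3,
      ← Real.rpow_mul hb0.le]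
    norm_num
  have hab : Real.sqrt (‖k₂‖ * ‖k₃‖) = sa * sb := Real.sqrt_mul ha0.le _
  set t := (inner ℝ k₂ k₃ : ℝ) with ht_def
  have ht : t ≤ ‖k₂‖ * ‖k₃‖ := real_inner_le_norm k₂ k₃
  have hden : 0 < 2 * (sa * sb) * (sa + sb) := by positivity
  rw [hab, ge_iff_le, div_le_iff₀ hden]
  -- squares
  have hX2 : ‖(2 * ‖k₂‖ ^ ((3:ℝ)/2))⁻¹ • k₂ - (2 * ‖k₃‖ ^ ((3:ℝ)/2))⁻¹ • k₃‖ ^ 2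
      = (2 * sa ^ 3)⁻¹ ^ 2 * ‖k₂‖ ^ 2 - 2 * ((2 * sa ^ 3)⁻¹ * (2 * sb ^ 3)⁻¹) * t
        + (2 * sb ^ 3)⁻¹ ^ 2 * ‖k₃‖ ^ 2 := by
    rw [hra, hrb, norm_sub_sq_real, real_inner_smul_left, real_inner_smul_right,
      norm_smul, norm_smul, mul_pow, mul_pow]
    have : |(2 * sa ^ 3)⁻¹| = (2 * sa ^ 3)⁻¹ := abs_of_pos (by positivity)
    have : |(2 * sb ^ 3)⁻¹| = (2 * sb ^ 3)⁻¹ := abs_of_pos (by positivity)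
    simp [Real.norm_eq_abs, abs_of_pos, abs_inv, abs_of_pos (show (0:ℝ) < 2 * sa ^ 3 by positivity),
      abs_of_pos (show (0:ℝ) < 2 * sb ^ 3 by positivity), abs_of_pos hsa, abs_of_pos hsb,
      ← ht_def]
    ring
  have hY2 : ‖k₂ - k₃‖ ^ 2 = ‖k₂‖ ^ 2 - 2 * t + ‖k₃‖ ^ 2 := by
    rw [norm_sub_sq_real, ← ht_def]
  -- compare squares
  have hsq : ‖k₂ - k₃‖ ^ 2 ≤
      (‖(2 * ‖k₂‖ ^ ((3:ℝ)/2))⁻¹ • k₂ - (2 * ‖k₃‖ ^ ((3:ℝ)/2))⁻¹ • k₃‖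
        * (2 * (sa * sb) * (sa + sb))) ^ 2 := by
    rw [mul_pow, hX2, hY2]
    rw [← hsa2, ← hsb2] at ht ⊢
    have h1 : (2 * sa ^ 3)⁻¹ ^ 2 = 1 / (4 * sa ^ 6) := by
      rw [one_div]; congr 1; ring
    have h2 : (2 * sb ^ 3)⁻¹ ^ 2 = 1 / (4 * sb ^ 6) := by
      rw [one_div]; congr 1; ring
    have h3 : (2 * sa ^ 3)⁻¹ * (2 * sb ^ 3)⁻¹ = 1 / (4 * sa ^ 3 * sb ^ 3) := by
      rw [one_div, ← mul_inv]; congr 1; ring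
    rw [h1, h2, h3]
    set X : ℝ := (sa ^ 2) ^ 2 - 2 * t + (sb ^ 2) ^ 2 with hX
    set Y : ℝ := (1 / (4 * sa ^ 6) * (sa ^ 2) ^ 2 - 2 * (1 / (4 * sa ^ 3 * sb ^ 3)) * t
        + 1 / (4 * sb ^ 6) * (sb ^ 2) ^ 2) * (2 * (sa * sb) * (sa + sb)) ^ 2 with hY
    have key : (Y - X) * (sa * sb) = 2 * (sa ^ 2 * sb ^ 2 - t) * (sa ^ 2 + sb ^ 2 + sa * sb) := by
      rw [hY, hX]
      field_simp
      ring
    have hnn2 : 0 ≤ 2 * (sa ^ 2 * sb ^ 2 - t) * (sa ^ 2 + sb ^ 2 + sa * sb) := by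
      have := sub_nonneg.mpr ht
      positivity
    have h4 : 0 ≤ (Y - X) * (sa * sb) := key ▸ hnn2
    have h5 : 0 ≤ Y - X := (mul_nonneg_iff_of_pos_right (mul_pos hsa hsb)).mp h4
    linarith
  have hnn : (0:ℝ) ≤ ‖(2 * ‖k₂‖ ^ ((3:ℝ)/2))⁻¹ • k₂ - (2 * ‖k₃‖ ^ ((3:ℝ)/2))⁻¹ • k₃‖
      * (2 * (sa * sb) * (sa + sb)) := by positivity
  have := Real.sqrt_le_sqrt hsq
  rwa [Real.sqrt_sq (norm_nonneg _), Real.sqrt_sq hnn] at this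
end

section
/- Let k, k₁, k₂, k₃ ∈ R^d \ {0} satisfy k + k₁ = k₂ + k₃, the resonance condition √|k| + √|k₁| = √|k₂| + √|k₃|, and the scale separations 20|k₁| ≤ |k₃|, 20|k₂| ≤ |k₃|. Writing ω_j = √|k_j| and ω = √|k|, one has |ω₁ − ω₂| = |ω − ω₃| ≤ (3/5)·|k₂ − k₁|/ω₃. -/
open Real

theorem freq_difference_estimate (d : ℕ) (k k₁ k₂ k₃ : EuclideanSpace ℝ (Fin d))
    (hk : k ≠ 0) (hk₁ : k₁ ≠ 0) (hk₂ : k₂ ≠ 0) (hk₃ : k₃ ≠ 0)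
    (hcons : k + k₁ = k₂ + k₃)
    (hΩ : Real.sqrt ‖k‖ + Real.sqrt ‖k₁‖ = Real.sqrt ‖k₂‖ + Real.sqrt ‖k₃‖)
    (h₁ : 20 * ‖k₁‖ ≤ ‖k₃‖) (h₂ : 20 * ‖k₂‖ ≤ ‖k₃‖) :
    |Real.sqrt ‖k₁‖ - Real.sqrt ‖k₂‖| = |Real.sqrt ‖k‖ - Real.sqrt ‖k₃‖| ∧
      |Real.sqrt ‖k‖ - Real.sqrt ‖k₃‖| ≤ (3/5) * ‖k₂ - k₁‖ / Real.sqrt ‖k₃‖ := by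
  set a := Real.sqrt ‖k‖ with ha'
  set e := Real.sqrt ‖k₃‖ with he'
  have ha2 : a ^ 2 = ‖k‖ := Real.sq_sqrt (norm_nonneg k)
  have he2 : e ^ 2 = ‖k₃‖ := Real.sq_sqrt (norm_nonneg k₃)
  have ha0 : 0 ≤ a := Real.sqrt_nonneg _
  have he0 : 0 < e := Real.sqrt_pos.mpr (norm_pos_iff.mpr hk₃)
  have hdiff : k - k₃ = k₂ - k₁ := by
    rw [sub_eq_sub_iff_add_eq_add]; exact hcons
  have hnorm1 : |‖k‖ - ‖k₃‖| ≤ ‖k₂ - k₁‖ := by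
    rw [← hdiff]; exact abs_norm_sub_norm_le k k₃
  have htri : ‖k₂ - k₁‖ ≤ ‖k₂‖ + ‖k₁‖ := norm_sub_le k₂ k₁
  have h9 : (9/10 : ℝ) * ‖k₃‖ ≤ ‖k‖ := by
    have := abs_le.mp hnorm1
    linarith [this.1]
  have hae : (2/3 : ℝ) * e ≤ a := by
    nlinarith [sq_nonneg (a - 2/3 * e), sq_nonneg (a + 2/3 * e)]
  constructor
  · have : Real.sqrt ‖k₁‖ - Real.sqrt ‖k₂‖ = e - a := by
      rw [he', ha']; linarith
    rw [this, abs_sub_comm]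
  · rw [le_div_iff₀ he0]
    have key : |a - e| * (a + e) = |‖k‖ - ‖k₃‖| := by
      rw [← ha2, ← he2, ← abs_of_nonneg (by linarith : (0:ℝ) ≤ a + e), ← abs_mul]
      ring_nf
    have h5 : e ≤ (3/5 : ℝ) * (a + e) := by linarith
    have habs0 : 0 ≤ |a - e| := abs_nonneg _
    nlinarith [key, hnorm1, mul_le_mul_of_nonneg_left h5 habs0]
end

section
/- Let k, k₁, k₂, k₃ ∈ R^d \ {0} satisfy k + k₁ = k₂ + k₃, the resonance √|k| + √|k₁| = √|k₂| + √|k₃|, and 20|k₁| ≤ |k₃|, 20|k₂| ≤ |k₃|. Then |1/|k|^{1/4} − 1/|k₃|^{1/4}| ≤ (2/5)·|k₂ − k₁|/|k₃|^{5/4}. -/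
open Real

set_option maxHeartbeats 2000000 in
theorem fourth_root_difference_estimate (d : ℕ) (k k₁ k₂ k₃ : EuclideanSpace ℝ (Fin d))
    (hk : k ≠ 0) (hk₁ : k₁ ≠ 0) (hk₂ : k₂ ≠ 0) (hk₃ : k₃ ≠ 0)
    (hcons : k + k₁ = k₂ + k₃)
    (hΩ : Real.sqrt ‖k‖ + Real.sqrt ‖k₁‖ = Real.sqrt ‖k₂‖ + Real.sqrt ‖k₃‖)
    (h₁ : 20 * ‖k₁‖ ≤ ‖k₃‖) (h₂ : 20 * ‖k₂‖ ≤ ‖k₃‖) :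
    |1 / ‖k‖ ^ ((1:ℝ)/4) - 1 / ‖k₃‖ ^ ((1:ℝ)/4)| ≤
      (2/5) * ‖k₂ - k₁‖ / ‖k₃‖ ^ ((5:ℝ)/4) := by
  have ha : (0:ℝ) < ‖k‖ := norm_pos_iff.mpr hk
  have hb : (0:ℝ) < ‖k₃‖ := norm_pos_iff.mpr hk₃
  set a := ‖k‖ with ha'
  set b := ‖k₃‖ with hb'
  set x := a ^ ((1:ℝ)/4) with hx'
  set y := b ^ ((1:ℝ)/4) with hy'
  have hxpos : 0 < x := Real.rpow_pos_of_pos ha _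
  have hypos : 0 < y := Real.rpow_pos_of_pos hb _
  have hx4 : x ^ 4 = a := by
    rw [hx', ← Real.rpow_natCast (a ^ ((1:ℝ)/4)) 4, ← Real.rpow_mul ha.le]
    norm_num
  have hy4 : y ^ 4 = b := by
    rw [hy', ← Real.rpow_natCast (b ^ ((1:ℝ)/4)) 4, ← Real.rpow_mul hb.le]
    norm_num
  have hy5 : y ^ 5 = b ^ ((5:ℝ)/4) := by
    rw [hy', ← Real.rpow_natCast (b ^ ((1:ℝ)/4)) 5, ← Real.rpow_mul hb.le]
    norm_num
  -- conservation
  have hkk : k - k₃ = k₂ - k₁ := sub_eq_sub_iff_add_eq_add.mpr hcons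
  have hD : |a - b| ≤ ‖k₂ - k₁‖ := by
    calc |a - b| ≤ ‖k - k₃‖ := abs_norm_sub_norm_le _ _
    _ = ‖k₂ - k₁‖ := by rw [hkk]
  have hDnn : (0:ℝ) ≤ ‖k₂ - k₁‖ := norm_nonneg _
  -- lower bound a ≥ 9/16 b
  have e1 : Real.sqrt ‖k₁‖ ^ 2 = ‖k₁‖ := Real.sq_sqrt (norm_nonneg _)
  have e3 : Real.sqrt b ^ 2 = b := Real.sq_sqrt hb.le
  have ea : Real.sqrt a ^ 2 = a := Real.sq_sqrt ha.le
  have h41 : 4 * Real.sqrt ‖k₁‖ ≤ Real.sqrt b := by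
    nlinarith [Real.sqrt_nonneg ‖k₁‖, Real.sqrt_nonneg b,
      sq_nonneg (Real.sqrt b - 4 * Real.sqrt ‖k₁‖),
      sq_nonneg (Real.sqrt b + 4 * Real.sqrt ‖k₁‖)]
  have hsa : (3/4) * Real.sqrt b ≤ Real.sqrt a := by
    have := Real.sqrt_nonneg ‖k₂‖
    linarith [hΩ]
  have hab : 9/16 * b ≤ a := by
    nlinarith [Real.sqrt_nonneg a, Real.sqrt_nonneg b, hsa]
  have hx86 : (43/50) * y ≤ x := by
    apply le_of_pow_le_pow_left₀ (n := 4) (by norm_num) hxpos.le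
    rw [mul_pow, hx4, hy4]
    nlinarith [hy4]
  -- key algebraic inequality
  have key : y ^ 4 ≤ (2/5) * (x * ((x + y) * (x ^ 2 + y ^ 2))) := by
    have h1 : (43/50*y) * ((43/50*y + y) * ((43/50*y) ^ 2 + y ^ 2)) ≤
        x * ((x + y) * (x ^ 2 + y ^ 2)) := by
      gcongr <;> positivity
    have h2 : y ^ 4 ≤ (2/5) * ((43/50*y) * ((43/50*y + y) * ((43/50*y) ^ 2 + y ^ 2))) := by
      nlinarith [pow_nonneg hypos.le 4]
    linarith
  set Q : ℝ := x * y * ((x + y) * (x ^ 2 + y ^ 2)) with hQ'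
  have hQpos : 0 < Q := by positivity
  have hmul : (1 / x - 1 / y) * Q = b - a := by
    rw [hQ', ← hx4, ← hy4]
    field_simp
    ring
  have habs : |1 / x - 1 / y| = |a - b| / Q := by
    rw [eq_div_iff hQpos.ne', ← abs_of_pos hQpos, ← abs_mul, hmul, abs_sub_comm]
  rw [habs, hb', ← hy5]
  rw [div_le_div_iff₀ hQpos (pow_pos hypos 5)]
  have step1 : |a - b| * y ^ 5 ≤ ‖k₂ - k₁‖ * y ^ 5 := by
    apply mul_le_mul_of_nonneg_right hD (by positivity)
  have step2 : ‖k₂ - k₁‖ * y ^ 5 ≤ 2 / 5 * ‖k₂ - k₁‖ * Q := by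
    have h5 : y ^ 5 ≤ 2/5 * Q := by
      have h6 := mul_le_mul_of_nonneg_left key hypos.le
      calc y ^ 5 = y * y ^ 4 := by ring
        _ ≤ y * ((2/5) * (x * ((x + y) * (x ^ 2 + y ^ 2)))) := h6
        _ = 2/5 * Q := by rw [hQ']; ring
    calc ‖k₂ - k₁‖ * y ^ 5 ≤ ‖k₂ - k₁‖ * (2/5 * Q) := mul_le_mul_of_nonneg_left h5 hDnn
      _ = 2 / 5 * ‖k₂ - k₁‖ * Q := by ring
  linarith
end
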